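/- Let γ > γ_m > 1, r > 0 and consider the ODE system on (0,∞)²: d e_r/dt = (e_s - F(e_r))/ε, d e_s/dt = -(e_s - F(e_r))/ε, where F(e_r) = ((γ-γ_m)/(γ_m-1)) e_r and ε > 0. Then e_r + e_s is conserved, and along solutions the quantity ς(e_r, e_s) = C_v ln( ((γ-γ_m)/(γ-1))·((e_r+e_s)/e_s)·( ((γ_m-1)/(γ-γ_m))·(e_s/e_r) )^{(γ_m-1)/(γ-1)} ) satisfies dς/dt = -(1/ε)·(r/((γ-1) e_r e_s))·(e_s - F(e_r))² ≤ 0, with equality if and only if e_s = F(e_r). -/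

import Mathlib

/-- H-theorem for the spatially homogeneous energy relaxation ODE system: `e_r + e_s` is
conserved, and the relaxation entropy correction `ς` decreases in time with
`dς/dt = -(1/ε)(r/((γ-1) e_r e_s))(e_s - F(e_r))² ≤ 0`, vanishing iff `e_s = F(e_r)`. -/
theorem stmt_11 (γ γm r Cv ε : ℝ) (h1 : 1 < γm) (h2 : γm < γ)
    (hr : 0 < r) (hCv : 0 < Cv) (hγm : γm = r / Cv + 1) (hε : 0 < ε)
    (er es : ℝ → ℝ) (hpos : ∀ t, 0 < er t ∧ 0 < es t)
    (hODEr : ∀ t, HasDerivAt er ((es t - ((γ - γm) / (γm - 1)) * er t) / ε) t)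
    (hODEs : ∀ t, HasDerivAt es (-((es t - ((γ - γm) / (γm - 1)) * er t) / ε)) t) :
    (∀ t : ℝ, er t + es t = er 0 + es 0) ∧
    ∀ t : ℝ,
      HasDerivAt
        (fun t : ℝ => Cv * Real.log (((γ - γm) / (γ - 1)) * ((er t + es t) / es t) *
          (((γm - 1) / (γ - γm)) * (es t / er t)) ^ ((γm - 1) / (γ - 1))))
        (-(1 / ε) * (r / ((γ - 1) * er t * es t)) *
          (es t - ((γ - γm) / (γm - 1)) * er t) ^ 2) t ∧
      (-(1 / ε) * (r / ((γ - 1) * er t * es t)) *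
          (es t - ((γ - γm) / (γm - 1)) * er t) ^ 2 ≤ 0) ∧
      (-(1 / ε) * (r / ((γ - 1) * er t * es t)) *
          (es t - ((γ - γm) / (γm - 1)) * er t) ^ 2 = 0 ↔
        es t = ((γ - γm) / (γm - 1)) * er t) := by
  have hγ1 : (0:ℝ) < γ - 1 := by linarith
  have hγm1 : (0:ℝ) < γm - 1 := by linarith
  have hγγm : (0:ℝ) < γ - γm := by linarith
  have hrCv : r = Cv * (γm - 1) := by
    field_simp at hγm
    nlinarith [hγm]
  -- conservation
  have hsum : ∀ t : ℝ, HasDerivAt (fun t => er t + es t) 0 t := by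
    intro t
    have := (hODEr t).add (hODEs t)
    exact (by simpa using this : HasDerivAt (er + es) 0 t)
  have hcons : ∀ t : ℝ, er t + es t = er 0 + es 0 := by
    intro t
    have : (fun t => er t + es t) t = (fun t => er t + es t) 0 :=
      is_const_of_deriv_eq_zero (fun x => (hsum x).differentiableAt)
        (fun x => (hsum x).deriv) t 0
    simpa using this
  refine ⟨hcons, fun t => ?_⟩
  obtain ⟨ha, hb⟩ := hpos t
  set a := er t with hadef
  set b := es t with hbdef
  have hab : 0 < a + b := by positivity
  set K : ℝ := (γ - γm) / (γm - 1) with hK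
  set p : ℝ := (γm - 1) / (γ - 1) with hp
  set D : ℝ := (b - K * a) / ε with hD
  -- function equality
  have hfun : (fun t : ℝ => Cv * Real.log (((γ - γm) / (γ - 1)) * ((er t + es t) / es t) *
          (((γm - 1) / (γ - γm)) * (es t / er t)) ^ ((γm - 1) / (γ - 1)))) =
      (fun t : ℝ => Cv * ((Real.log ((γ - γm) / (γ - 1)) + Real.log (er t + es t)
          - Real.log (es t)) + p * (Real.log ((γm - 1) / (γ - γm)) + Real.log (es t)
          - Real.log (er t)))) := by
    funext s
    obtain ⟨ha', hb'⟩ := hpos s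
    have hab' : 0 < er s + es s := by positivity
    have hA : (0:ℝ) < (γ - γm) / (γ - 1) := by positivity
    have hB : (0:ℝ) < (γm - 1) / (γ - γm) := by positivity
    have hBr : (0:ℝ) < ((γm - 1) / (γ - γm)) * (es s / er s) := by positivity
    rw [Real.log_mul (by positivity) (by positivity), Real.log_rpow hBr,
      Real.log_mul hA.ne' (by positivity), Real.log_div hab'.ne' hb'.ne',
      Real.log_mul hB.ne' (by positivity), Real.log_div hb'.ne' ha'.ne']
    ring
  rw [hfun]
  have hda : HasDerivAt er D t := by simpa [hD, hK] using hODEr t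
  have hdb : HasDerivAt es (-D) t := by simpa [hD, hK] using hODEs t
  have hdsum : HasDerivAt (fun t => er t + es t) (D + -D) t := hda.add hdb
  have hl1 : HasDerivAt (fun t => Real.log (er t + es t)) ((D + -D) / (a + b)) t :=
    hdsum.log hab.ne'
  have hl2 : HasDerivAt (fun t => Real.log (es t)) (-D / b) t := hdb.log hb.ne'
  have hl3 : HasDerivAt (fun t => Real.log (er t)) (D / a) t := hda.log ha.ne'
  have hg : HasDerivAt (fun t : ℝ => Cv * ((Real.log ((γ - γm) / (γ - 1)) + Real.log (er t + es t)
          - Real.log (es t)) + p * (Real.log ((γm - 1) / (γ - γm)) + Real.log (es t)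
          - Real.log (er t))))
      (Cv * (((0 + (D + -D) / (a + b)) - -D / b) + p * ((0 + -D / b) - D / a))) t := by
    exact (((((hasDerivAt_const t _).add hl1).sub hl2).add
      ((((hasDerivAt_const t _).add hl2).sub hl3).const_mul p)).const_mul Cv)
  have hval : Cv * (((0 + (D + -D) / (a + b)) - -D / b) + p * ((0 + -D / b) - D / a)) =
      -(1 / ε) * (r / ((γ - 1) * a * b)) * (b - K * a) ^ 2 := by
    rw [hrCv, hD, hK, hp]
    field_simp
    ring
  refine ⟨hval ▸ hg, ?_, ?_⟩
  · have hc : -(1 / ε) * (r / ((γ - 1) * a * b)) ≤ 0 := by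
      rw [neg_mul]
      apply neg_nonpos_of_nonneg
      positivity
    exact mul_nonpos_of_nonpos_of_nonneg hc (sq_nonneg _)
  · have hc : -(1 / ε) * (r / ((γ - 1) * a * b)) ≠ 0 := by
      have : (0:ℝ) < (1 / ε) * (r / ((γ - 1) * a * b)) := by positivity
      rw [neg_mul]
      exact neg_ne_zero.mpr this.ne'
    constructor
    · intro h
      have := (mul_eq_zero.mp h).resolve_left hc
      have := pow_eq_zero_iff (n := 2) (by norm_num) |>.mp this
      linarith
    · intro h
      rw [h]
      ring
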